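/- Let U ⊆ ℂ be open and let φ, ς : ℂ → ℂ be complex differentiable (holomorphic) on U. Define the Airy stress function W(x, y) := Re((x − iy)·φ(x + iy) + ς(x + iy)) for x + iy ∈ U. Then W is twice continuously differentiable on the corresponding open subset of ℝ² and its Laplacian satisfies ∂²W/∂x² + ∂²W/∂y² = 4·Re(φ′(x + iy)); equivalently, with σ_{xx} = ∂²W/∂y² and σ_{yy} = ∂²W/∂x², the first Kolosov–Muskhelishvili formula σ_{xx} + σ_{yy} = 4 Re{φ′(z)} holds. -/

import Mathlib

open Complex

private lemma derivx' {f : ℂ → ℂ} {f' : ℂ} {x y : ℝ}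
    (hf : HasDerivAt f f' ((x : ℂ) + (y : ℂ) * I)) :
    HasDerivAt (fun t : ℝ => f ((t : ℂ) + (y : ℂ) * I)) f' x := by
  have h1 : HasDerivAt (fun w : ℂ => w + (y : ℂ) * I) 1 (x : ℂ) :=
    (hasDerivAt_id _).add_const _
  simpa using (hf.comp (x : ℂ) h1).comp_ofReal

private lemma derivy' {f : ℂ → ℂ} {f' : ℂ} {x y : ℝ}
    (hf : HasDerivAt f f' ((x : ℂ) + (y : ℂ) * I)) :
    HasDerivAt (fun t : ℝ => f ((x : ℂ) + (t : ℂ) * I)) (f' * I) y := by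
  have h1 : HasDerivAt (fun w : ℂ => (x : ℂ) + w * I) I (y : ℂ) := by
    simpa using ((hasDerivAt_id ((y : ℂ))).mul_const I).const_add (x : ℂ)
  simpa using (hf.comp (y : ℂ) h1).comp_ofReal

private lemma hasDerivAt_re {h : ℝ → ℂ} {h' : ℂ} {t : ℝ} (hh : HasDerivAt h h' t) :
    HasDerivAt (fun s => (h s).re) h'.re t :=
  Complex.reCLM.hasFDerivAt.comp_hasDerivAt t hh

/-- first Kolosov–Muskhelishvili formula: for φ, ς holomorphic on an open
set U ⊆ ℂ, the Airy stress function W(x,y) = Re((x − iy) φ(x+iy) + ς(x+iy)) is twice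
continuously differentiable and satisfies ΔW = W_xx + W_yy = 4 Re φ′(z), i.e. with
σ_xx = W_yy and σ_yy = W_xx, σ_xx + σ_yy = 4 Re φ′(z). -/
theorem stmt13 (U : Set ℂ) (hU : IsOpen U) (φ ς : ℂ → ℂ)
    (hφ : DifferentiableOn ℂ φ U) (hς : DifferentiableOn ℂ ς U) :
    let W : ℝ → ℝ → ℝ := fun x y =>
      (((x : ℂ) - (y : ℂ) * Complex.I) * φ ((x : ℂ) + (y : ℂ) * Complex.I) +
        ς ((x : ℂ) + (y : ℂ) * Complex.I)).re
    ContDiffOn ℝ 2 (fun p : ℝ × ℝ => W p.1 p.2)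
        {p : ℝ × ℝ | (p.1 : ℂ) + (p.2 : ℂ) * Complex.I ∈ U} ∧
    ∀ x y : ℝ, (x : ℂ) + (y : ℂ) * Complex.I ∈ U →
      deriv (deriv (fun x' : ℝ => W x' y)) x + deriv (deriv (fun y' : ℝ => W x y')) y
        = 4 * (deriv φ ((x : ℂ) + (y : ℂ) * Complex.I)).re := by
  intro W
  have hφa : AnalyticOnNhd ℂ φ U := hφ.analyticOnNhd hU
  have hςa : AnalyticOnNhd ℂ ς U := hς.analyticOnNhd hU
  have hφ1 : DifferentiableOn ℂ (deriv φ) U := hφa.deriv.differentiableOn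
  have hς1 : DifferentiableOn ℂ (deriv ς) U := hςa.deriv.differentiableOn
  constructor
  · -- smoothness
    have he : ContDiff ℝ 2 (fun p : ℝ × ℝ => (p.1 : ℂ) + (p.2 : ℂ) * I) := by
      apply ContDiff.add
      · exact Complex.ofRealCLM.contDiff.comp contDiff_fst
      · exact (Complex.ofRealCLM.contDiff.comp contDiff_snd).mul contDiff_const
    have hF : ContDiffOn ℝ 2
        (fun z : ℂ => ((starRingEnd ℂ z) * φ z + ς z).re) U := by
      have hc : ContDiff ℝ 2 (starRingEnd ℂ : ℂ → ℂ) := Complex.conjCLE.contDiff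
      have hφr : ContDiffOn ℝ 2 φ U := (hφ.contDiffOn hU).restrict_scalars ℝ
      have hςr : ContDiffOn ℝ 2 ς U := (hς.contDiffOn hU).restrict_scalars ℝ
      exact Complex.reCLM.contDiff.comp_contDiffOn
        (((hc.contDiffOn).mul hφr).add hςr)
    have := hF.comp (he.contDiffOn) (fun p hp => hp)
    refine this.congr ?_
    intro p hp
    simp only [Function.comp_apply, map_add, map_mul, Complex.conj_ofReal, Complex.conj_I, W]
    congr 1
    ring
  · -- the Laplacian identity
    intro x y hz
    set z : ℂ := (x : ℂ) + (y : ℂ) * I with hzdef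
    -- first derivatives
    have hdx : ∀ a b : ℝ, (a : ℂ) + (b : ℂ) * I ∈ U →
        HasDerivAt (fun t : ℝ => W t b)
          ((φ ((a:ℂ)+(b:ℂ)*I) + ((a:ℂ)-(b:ℂ)*I) * deriv φ ((a:ℂ)+(b:ℂ)*I)
            + deriv ς ((a:ℂ)+(b:ℂ)*I)).re) a := by
      intro a b hm
      have hφd := (hφ.differentiableAt (hU.mem_nhds hm)).hasDerivAt
      have hςd := (hς.differentiableAt (hU.mem_nhds hm)).hasDerivAt
      have hA : HasDerivAt (fun t : ℝ => ((t : ℂ) - (b : ℂ) * I)) 1 a := by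
        simpa using ((hasDerivAt_id a).ofReal_comp).sub_const ((b:ℂ)*I)
      have h := hasDerivAt_re (((hA.mul (derivx' hφd)).add (derivx' hςd)))
      simp only [W]
      first
      | exact h
      | exact h.congr_deriv (by ring)
    have hdy : ∀ a b : ℝ, (a : ℂ) + (b : ℂ) * I ∈ U →
        HasDerivAt (fun t : ℝ => W a t)
          (((-I) * φ ((a:ℂ)+(b:ℂ)*I) + ((a:ℂ)-(b:ℂ)*I) * (deriv φ ((a:ℂ)+(b:ℂ)*I) * I)
            + deriv ς ((a:ℂ)+(b:ℂ)*I) * I).re) b := by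
      intro a b hm
      have hφd := (hφ.differentiableAt (hU.mem_nhds hm)).hasDerivAt
      have hςd := (hς.differentiableAt (hU.mem_nhds hm)).hasDerivAt
      have hA : HasDerivAt (fun t : ℝ => ((a : ℂ) - (t : ℂ) * I)) (-I) b := by
        simpa using (((hasDerivAt_id b).ofReal_comp).mul_const I).const_sub (a:ℂ)
      have h := hasDerivAt_re (((hA.mul (derivy' hφd)).add (derivy' hςd)))
      simp only [W]
      first
      | exact h
      | exact h.congr_deriv (by ring)
    -- openness of slices
    have hox : IsOpen {t : ℝ | (t : ℂ) + (y : ℂ) * I ∈ U} :=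
      hU.preimage (by fun_prop)
    have hoy : IsOpen {t : ℝ | (x : ℂ) + (t : ℂ) * I ∈ U} :=
      hU.preimage (by fun_prop)
    -- second derivative in x
    have hφ1d := (hφ1.differentiableAt (hU.mem_nhds hz)).hasDerivAt
    have hς1d := (hς1.differentiableAt (hU.mem_nhds hz)).hasDerivAt
    have hφd := (hφ.differentiableAt (hU.mem_nhds hz)).hasDerivAt
    have h2x : deriv (deriv (fun x' : ℝ => W x' y)) x
        = (2 * deriv φ z + ((x:ℂ)-(y:ℂ)*I) * deriv (deriv φ) z + deriv (deriv ς) z).re := by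
      have hev : deriv (fun x' : ℝ => W x' y) =ᶠ[nhds x]
          (fun t : ℝ => (φ ((t:ℂ)+(y:ℂ)*I) + ((t:ℂ)-(y:ℂ)*I) * deriv φ ((t:ℂ)+(y:ℂ)*I)
            + deriv ς ((t:ℂ)+(y:ℂ)*I)).re) := by
        filter_upwards [hox.mem_nhds hz] with t ht using (hdx t y ht).deriv
      rw [hev.deriv_eq]
      have hA : HasDerivAt (fun t : ℝ => ((t : ℂ) - (y : ℂ) * I)) 1 x := by
        simpa using ((hasDerivAt_id x).ofReal_comp).sub_const ((y:ℂ)*I)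
      have h := hasDerivAt_re
        (((derivx' hφd).add (hA.mul (derivx' hφ1d))).add (derivx' hς1d))
      simp only [Pi.add_apply, Pi.mul_apply] at h
      rw [h.deriv]
      congr 1
      ring
    have h2y : deriv (deriv (fun y' : ℝ => W x y')) y
        = (2 * deriv φ z - ((x:ℂ)-(y:ℂ)*I) * deriv (deriv φ) z - deriv (deriv ς) z).re := by
      have hev : deriv (fun y' : ℝ => W x y') =ᶠ[nhds y]
          (fun t : ℝ => ((-I) * φ ((x:ℂ)+(t:ℂ)*I) + ((x:ℂ)-(t:ℂ)*I) * (deriv φ ((x:ℂ)+(t:ℂ)*I) * I)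
            + deriv ς ((x:ℂ)+(t:ℂ)*I) * I).re) := by
        filter_upwards [hoy.mem_nhds hz] with t ht using (hdy x t ht).deriv
      rw [hev.deriv_eq]
      have hA : HasDerivAt (fun t : ℝ => ((x : ℂ) - (t : ℂ) * I)) (-I) y := by
        simpa using (((hasDerivAt_id y).ofReal_comp).mul_const I).const_sub (x:ℂ)
      have h := hasDerivAt_re
        ((((derivy' hφd).const_mul (-I)).add
          (hA.mul ((derivy' hφ1d).mul_const I))).add ((derivy' hς1d).mul_const I))
      simp only [Pi.add_apply, Pi.mul_apply] at h
      rw [h.deriv]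
      have hI := Complex.I_mul_I
      congr 1
      linear_combination (((x:ℂ)-(y:ℂ)*I) * deriv (deriv φ) z + deriv (deriv ς) z
        - 2 * deriv φ z) * hI
    rw [h2x, h2y, ← Complex.add_re]
    have : (2 * deriv φ z + ((x:ℂ)-(y:ℂ)*I) * deriv (deriv φ) z + deriv (deriv ς) z)
        + (2 * deriv φ z - ((x:ℂ)-(y:ℂ)*I) * deriv (deriv φ) z - deriv (deriv ς) z)
        = 4 * deriv φ z := by ring
    rw [this]
    simp [Complex.mul_re]
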